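/- Let M = (M_1, ..., M_N) be a POVM on ℂ^d with Naimark dilation given by an isometry J : ℂ^d → H⊕ and a PVM P = (P_1, ..., P_N) on H⊕ with M_i = J* P_i J. Suppose N' = (N_{ij}) is a joint POVM with first margin M (∑_j N_{ij} = M_i). Then for each i, j there exists a unique positive operator P_{ij} ≤ P_i on H⊕ with P_{ij} = P_i P_{ij} P_i, ∑_j P_{ij} = P_i, and N_{ij} = J* P_{ij} J. -/

import Mathlib

open Matrix
open scoped ComplexOrder

section Helpers

set_option linter.unusedSectionVars false

variable {m n : Type*} [Fintype m] [Fintype n]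

private lemma matrix_eq_zero_of_mulVec [DecidableEq n] {A : Matrix m n ℂ}
    (h : ∀ v, A.mulVec v = 0) : A = 0 := by
  ext i j
  have := congrFun (h (Pi.single j 1)) i
  simpa using this

private lemma psd_neg_eq_zero {S : Matrix n n ℂ} (h1 : S.PosSemidef)
    (h2 : (-S).PosSemidef) : S = 0 := by
  classical
  apply matrix_eq_zero_of_mulVec
  intro v
  refine (h1.dotProduct_mulVec_zero_iff v).mp ?_
  have a := h1.dotProduct_mulVec_nonneg v
  have b := h2.dotProduct_mulVec_nonneg v
  rw [neg_mulVec, dotProduct_neg] at b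
  exact le_antisymm (neg_nonneg.mp b) a

private lemma vec_eq_zero_of_orth {s : Set (n → ℂ)}
    (hspan : Submodule.span ℂ s = ⊤) {w : n → ℂ}
    (h : ∀ v ∈ s, star v ⬝ᵥ w = 0) : w = 0 := by
  let g : (n → ℂ) →ₗ[ℂ] ℂ :=
    { toFun := fun v => v ⬝ᵥ star w
      map_add' := fun a b => add_dotProduct a b (star w)
      map_smul' := fun c a => smul_dotProduct c a (star w) }
  have hg : g = 0 := by
    apply LinearMap.ext_on hspan
    intro v hv
    have hv0 := h v hv
    have : v ⬝ᵥ star w = star (star v ⬝ᵥ w) := by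
      simp [dotProduct, star_sum, mul_comm]
    simp only [LinearMap.zero_apply, g, LinearMap.coe_mk, AddHom.coe_mk]
    rw [this, hv0, star_zero]
  have hw : w ⬝ᵥ star w = 0 := by
    have := congrArg (fun f => f w) hg
    simpa [g] using this
  have : star w ⬝ᵥ w = 0 := by rwa [dotProduct_comm] at hw
  exact (dotProduct_star_self_eq_zero).mp this

private lemma matrix_eq_zero_of_span [DecidableEq n] {s : Set (n → ℂ)}
    (hspan : Submodule.span ℂ s = ⊤) {A : Matrix m n ℂ}
    (h : ∀ v ∈ s, A.mulVec v = 0) : A = 0 := by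
  have h0 : A.mulVecLin = 0 := by
    apply LinearMap.ext_on hspan
    intro v hv
    simpa [Matrix.mulVecLin_apply] using h v hv
  apply matrix_eq_zero_of_mulVec
  intro v
  have := LinearMap.congr_fun h0 v
  simpa [Matrix.mulVecLin_apply] using this

private lemma support_proj_exists [DecidableEq n] {R : Matrix n n ℂ}
    (hR : R.IsHermitian) :
    ∃ q pv : Matrix n n ℂ, qᴴ = q ∧ pvᴴ = pv ∧ R * pv = q ∧ pv * R = q ∧
      q * R = R ∧ R * q = R ∧ pv * R * pv = pv := by
  have hsa : IsSelfAdjoint R := hR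
  have hc : ∀ f : ℝ → ℝ, ContinuousOn f (spectrum ℝ R) :=
    fun f => Matrix.finite_real_spectrum.continuousOn f
  have hid : cfc (fun x : ℝ => x) R = R := cfc_id' ℝ R hsa
  have hRpv : R * cfc (fun x : ℝ => x⁻¹) R = cfc (fun x : ℝ => x * x⁻¹) R := by
    rw [cfc_mul _ _ R (hc _) (hc _), hid]
  have hpvR : cfc (fun x : ℝ => x⁻¹) R * R = cfc (fun x : ℝ => x * x⁻¹) R := by
    rw [show (fun x : ℝ => x * x⁻¹) = fun x : ℝ => x⁻¹ * x from funext fun x => mul_comm _ _,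
      cfc_mul _ _ R (hc _) (hc _), hid]
  have hfun : ∀ x : ℝ, x * x⁻¹ * x = x := by
    intro x
    rcases eq_or_ne x 0 with rfl | hx
    · simp
    · field_simp
  refine ⟨_, _, ?_, ?_, hRpv, hpvR, ?_, ?_, ?_⟩
  · rw [← Matrix.star_eq_conjTranspose]
    exact (cfc_predicate (fun x : ℝ => x * x⁻¹) R).star_eq
  · rw [← Matrix.star_eq_conjTranspose]
    exact (cfc_predicate (fun x : ℝ => x⁻¹) R).star_eq
  · calc cfc (fun x : ℝ => x * x⁻¹) R * R
        = cfc (fun x : ℝ => x * x⁻¹) R * cfc (fun x : ℝ => x) R := by rw [hid]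
      _ = cfc (fun x : ℝ => (x * x⁻¹) * x) R := (cfc_mul _ _ R (hc _) (hc _)).symm
      _ = cfc (fun x : ℝ => x) R := cfc_congr fun x _ => hfun x
      _ = R := hid
  · calc R * cfc (fun x : ℝ => x * x⁻¹) R
        = cfc (fun x : ℝ => x) R * cfc (fun x : ℝ => x * x⁻¹) R := by rw [hid]
      _ = cfc (fun x : ℝ => x * (x * x⁻¹)) R := (cfc_mul _ _ R (hc _) (hc _)).symm
      _ = cfc (fun x : ℝ => x) R := by
          refine cfc_congr fun x _ => ?_
          rcases eq_or_ne x 0 with rfl | hx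
          · simp
          · field_simp
      _ = R := hid
  · rw [hpvR, ← cfc_mul _ _ R (hc _) (hc _)]
    apply cfc_congr
    intro x _
    rcases eq_or_ne x 0 with rfl | hx
    · simp
    · field_simp

open scoped MatrixOrder in
private lemma absorb [DecidableEq n] {R q X : Matrix n n ℂ}
    (hX : X.PosSemidef) (hRX : (R - X).PosSemidef) (hqh : qᴴ = q)
    (hqR : q * R = R) : X * q = X ∧ q * X = X := by
  have h1qh : (1 - q)ᴴ = 1 - q := by
    rw [conjTranspose_sub, conjTranspose_one, hqh]
  have h1qR : (1 - q) * R = 0 := by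
    rw [sub_mul, one_mul, hqR, sub_self]
  set B := CFC.sqrt X * (1 - q) with hB
  have hBB : Bᴴ * B = (1 - q) * X * (1 - q) := by
    rw [hB, conjTranspose_mul, h1qh, (CFC.sqrt_nonneg X).posSemidef.isHermitian.eq]
    calc (1 - q) * CFC.sqrt X * (CFC.sqrt X * (1 - q))
        = (1 - q) * (CFC.sqrt X * CFC.sqrt X) * (1 - q) := by
          simp only [mul_assoc]
      _ = (1 - q) * X * (1 - q) := by rw [CFC.sqrt_mul_sqrt_self X hX.nonneg]
  have hneg : (1 - q) * (R - X) * (1 - q) = -(Bᴴ * B) := by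
    rw [hBB]
    have h2 : (1 - q) * (R - X) = -((1 - q) * X) := by
      rw [mul_sub, h1qR, zero_sub]
    rw [h2, neg_mul]
  have hP1 : ((1 - q) * (R - X) * (1 - q)).PosSemidef := by
    have := hRX.conjTranspose_mul_mul_same (B := 1 - q)
    rwa [h1qh] at this
  have hP2 : (Bᴴ * B).PosSemidef := posSemidef_conjTranspose_mul_self B
  have hzero : Bᴴ * B = 0 := psd_neg_eq_zero hP2 (hneg ▸ hP1)
  have hB0 : B = 0 := conjTranspose_mul_self_eq_zero.mp hzero
  have hX1q : X * (1 - q) = 0 := by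
    have : X * (1 - q) = CFC.sqrt X * B := by
      rw [hB, ← mul_assoc, CFC.sqrt_mul_sqrt_self X hX.nonneg]
    rw [this, hB0, mul_zero]
  have hXq : X * q = X := by
    have h3 : X - X * q = 0 := by
      calc X - X * q = X * (1 - q) := by rw [mul_sub, mul_one]
        _ = 0 := hX1q
    have := sub_eq_zero.mp h3
    exact this.symm
  refine ⟨hXq, ?_⟩
  calc q * X = (Xᴴ * qᴴ)ᴴ := by simp [conjTranspose_mul]
    _ = (X * q)ᴴ := by rw [hX.isHermitian.eq, hqh]
    _ = X := by rw [hXq, hX.isHermitian.eq]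

private lemma posSemidef_sum {ι : Type*} [DecidableEq n] (s : Finset ι)
    (f : ι → Matrix n n ℂ) (h : ∀ k ∈ s, (f k).PosSemidef) :
    (∑ k ∈ s, f k).PosSemidef :=
  Finset.sum_induction f _ (fun _ _ ha hb => ha.add hb) Matrix.PosSemidef.zero h

end Helpers

/-- Structure of joint POVMs with a given first margin, via a minimal Naimark
dilation: every joint effect arises uniquely from a block decomposition of the
dilating PVM. -/
theorem joint_povm_from_dilation
    (d D N K : ℕ)
    (J : Matrix (Fin D) (Fin d) ℂ) (hJ : Jᴴ * J = 1)
    (P : Fin N → Matrix (Fin D) (Fin D) ℂ)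
    (hPh : ∀ i, (P i).IsHermitian)
    (hPorth : ∀ i j, P i * P j = if i = j then P i else 0)
    (hPsum : ∑ i, P i = 1)
    (M : Fin N → Matrix (Fin d) (Fin d) ℂ)
    (hM : ∀ i, M i = Jᴴ * P i * J)
    (hmin : Submodule.span ℂ
      {w : Fin D → ℂ | ∃ i : Fin N, ∃ φ : Fin d → ℂ, w = (P i * J).mulVec φ} = ⊤)
    (Nj : Fin N → Fin K → Matrix (Fin d) (Fin d) ℂ)
    (hNjpos : ∀ i j, (Nj i j).PosSemidef)
    (hNjsum : ∑ i, ∑ j, Nj i j = 1)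
    (hmarg : ∀ i, ∑ j, Nj i j = M i) :
    ∃! Q : Fin N → Fin K → Matrix (Fin D) (Fin D) ℂ,
      (∀ i j, (Q i j).PosSemidef ∧ (P i - Q i j).PosSemidef ∧
        Q i j = P i * Q i j * P i ∧ Nj i j = Jᴴ * Q i j * J) ∧
      (∀ i, ∑ j, Q i j = P i) := by
  classical
  -- basic facts
  have hPP : ∀ i, P i * P i = P i := fun i => by simpa using hPorth i i
  have hPO : ∀ i k, i ≠ k → P i * P k = 0 := fun i k h => by simpa [h] using hPorth i k
  have hMh : ∀ i, (M i).IsHermitian := by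
    intro i
    rw [hM i]
    exact isHermitian_conjTranspose_mul_mul J (hPh i)
  -- support projections of the margins
  choose q pv hqh hpvh hRpv hpvR hqM hMq hpMp using fun i => support_proj_exists (hMh i)
  -- N_ij ≤ M_i
  have hle : ∀ i j, (M i - Nj i j).PosSemidef := by
    intro i j
    have hsum : M i - Nj i j = ∑ k ∈ Finset.univ.erase j, Nj i k := by
      rw [← hmarg i, ← Finset.add_sum_erase Finset.univ (Nj i) (Finset.mem_univ j)]
      exact add_sub_cancel_left _ _
    rw [hsum]
    exact posSemidef_sum _ _ fun k _ => hNjpos i k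
  have habs : ∀ i j, Nj i j * q i = Nj i j ∧ q i * Nj i j = Nj i j :=
    fun i j => absorb (hNjpos i j) (hle i j) (hqh i) (hqM i)
  -- notation for the dilating isometries
  have hVH : ∀ i, (P i * J)ᴴ = Jᴴ * P i := fun i => by
    rw [conjTranspose_mul, (hPh i).eq]
  have hVV : ∀ i, (P i * J)ᴴ * (P i * J) = M i := by
    intro i
    rw [hVH i, hM i]
    calc Jᴴ * P i * (P i * J) = Jᴴ * (P i * P i) * J := by
          simp only [Matrix.mul_assoc]
      _ = Jᴴ * P i * J := by rw [hPP i]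
  -- V_i * q_i = V_i
  have hVq : ∀ i, (P i * J) * q i = P i * J := by
    intro i
    have h1qh : (1 - q i)ᴴ = 1 - q i := by
      rw [conjTranspose_sub, conjTranspose_one, hqh]
    have hz : ((P i * J) * (1 - q i))ᴴ * ((P i * J) * (1 - q i)) = 0 := by
      rw [conjTranspose_mul, h1qh]
      calc (1 - q i) * (P i * J)ᴴ * ((P i * J) * (1 - q i))
          = (1 - q i) * ((P i * J)ᴴ * (P i * J)) * (1 - q i) := by
            simp only [Matrix.mul_assoc]
        _ = (1 - q i) * M i * (1 - q i) := by rw [hVV i]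
        _ = 0 := by
            have h4 : (1 - q i) * M i = 0 := by
              rw [sub_mul, one_mul, hqM i, sub_self]
            rw [h4, Matrix.zero_mul]
    have h0 : (P i * J) * (1 - q i) = 0 := conjTranspose_mul_self_eq_zero.mp hz
    have h5 : P i * J - (P i * J) * q i = 0 := by
      calc P i * J - (P i * J) * q i = (P i * J) * (1 - q i) := by
            rw [Matrix.mul_sub, Matrix.mul_one]
        _ = 0 := h0
    exact (sub_eq_zero.mp h5).symm
  -- Jᴴ * (P i * J) = M i
  have hJV : ∀ i, Jᴴ * (P i * J) = M i := fun i => by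
    rw [hM i, Matrix.mul_assoc]
  have hVHJ : ∀ i, (P i * J)ᴴ * J = M i := fun i => by
    rw [hVH i, hM i]
  -- minimality: V_i pv_i V_iᴴ = P i
  have hE : ∀ i, (P i * J) * pv i * (P i * J)ᴴ = P i := by
    intro i
    have key : ∀ k, (P i - (P i * J) * pv i * (P i * J)ᴴ) * (P k * J) = 0 := by
      intro k
      rcases eq_or_ne i k with rfl | hik
      · have h1 : P i * (P i * J) = P i * J := by
          rw [← Matrix.mul_assoc, hPP i]
        have h2 : ((P i * J) * pv i * (P i * J)ᴴ) * (P i * J) = P i * J := by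
          calc ((P i * J) * pv i * (P i * J)ᴴ) * (P i * J)
              = (P i * J) * (pv i * ((P i * J)ᴴ * (P i * J))) := by
                simp only [Matrix.mul_assoc]
            _ = (P i * J) * (pv i * M i) := by rw [hVV i]
            _ = (P i * J) * q i := by rw [hpvR i]
            _ = P i * J := hVq i
        rw [Matrix.sub_mul, h1, h2, sub_self]
      · have h1 : P i * (P k * J) = 0 := by
          rw [← Matrix.mul_assoc, hPO i k hik, Matrix.zero_mul]
        have h2 : ((P i * J) * pv i * (P i * J)ᴴ) * (P k * J) = 0 := by
          have h3 : (P i * J)ᴴ * (P k * J) = 0 := by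
            rw [hVH i]
            calc Jᴴ * P i * (P k * J) = Jᴴ * (P i * P k) * J := by
                  simp only [Matrix.mul_assoc]
              _ = 0 := by rw [hPO i k hik, Matrix.mul_zero, Matrix.zero_mul]
          calc ((P i * J) * pv i * (P i * J)ᴴ) * (P k * J)
              = (P i * J) * pv i * ((P i * J)ᴴ * (P k * J)) := by
                simp only [Matrix.mul_assoc]
            _ = 0 := by rw [h3, Matrix.mul_zero]
        rw [Matrix.sub_mul, h1, h2, sub_self]
    have hzero : P i - (P i * J) * pv i * (P i * J)ᴴ = 0 := by
      apply matrix_eq_zero_of_span hmin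
      rintro v ⟨k, φ, rfl⟩
      rw [mulVec_mulVec, key k, zero_mulVec]
    exact (sub_eq_zero.mp hzero).symm
  -- the candidate solution
  set Qdef : Fin N → Fin K → Matrix (Fin D) (Fin D) ℂ :=
    fun i j => (P i * J) * (pv i * Nj i j * pv i) * (P i * J)ᴴ with hQdef
  have hQpsd : ∀ i j, (Qdef i j).PosSemidef := by
    intro i j
    have hT : (pv i * Nj i j * pv i).PosSemidef := by
      have := (hNjpos i j).conjTranspose_mul_mul_same (B := pv i)
      rwa [hpvh i] at this
    exact hT.mul_mul_conjTranspose_same (P i * J)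
  have hQsum : ∀ i, ∑ j, Qdef i j = P i := by
    intro i
    have hstep : ∑ j, Qdef i j = (P i * J) * (pv i * (∑ j, Nj i j) * pv i) * (P i * J)ᴴ := by
      simp only [hQdef, Matrix.mul_sum, Matrix.sum_mul]
    rw [hstep, hmarg i, hpMp i, hE i]
  have hQrec : ∀ i j, Nj i j = Jᴴ * Qdef i j * J := by
    intro i j
    have hstep : Jᴴ * Qdef i j * J
        = (Jᴴ * ((P i * J)) * (pv i * Nj i j * pv i)) * ((P i * J)ᴴ * J) := by
      simp only [hQdef, Matrix.mul_assoc]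
    rw [hstep]
    have hstep2 : Jᴴ * (P i * J) * (pv i * Nj i j * pv i) * ((P i * J)ᴴ * J) = Nj i j := by
      rw [hJV i, hVHJ i]
      calc M i * (pv i * Nj i j * pv i) * M i
          = (M i * pv i) * Nj i j * (pv i * M i) := by simp only [Matrix.mul_assoc]
        _ = q i * Nj i j * q i := by rw [hRpv i, hpvR i]
        _ = Nj i j := by rw [(habs i j).2, (habs i j).1]
    rw [hstep2]
  have hQcomp : ∀ i j, Qdef i j = P i * Qdef i j * P i := by
    intro i j
    have h1 : P i * (P i * J) = P i * J := by rw [← Matrix.mul_assoc, hPP i]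
    have h2 : (P i * J)ᴴ * P i = (P i * J)ᴴ := by
      rw [hVH i, Matrix.mul_assoc, hPP i]
    calc Qdef i j = (P i * (P i * J)) * (pv i * Nj i j * pv i) * ((P i * J)ᴴ * P i) := by
          rw [h1, h2]
      _ = P i * Qdef i j * P i := by simp only [hQdef, Matrix.mul_assoc]
  have hQle : ∀ i j, (P i - Qdef i j).PosSemidef := by
    intro i j
    have hstep : P i - Qdef i j = ∑ k ∈ Finset.univ.erase j, Qdef i k := by
      rw [← hQsum i, ← Finset.add_sum_erase Finset.univ (Qdef i) (Finset.mem_univ j)]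
      exact add_sub_cancel_left _ _
    rw [hstep]
    exact posSemidef_sum _ _ fun k _ => hQpsd i k
  refine ⟨Qdef, ⟨fun i j => ⟨hQpsd i j, hQle i j, hQcomp i j, hQrec i j⟩, hQsum⟩, ?_⟩
  -- uniqueness
  rintro Q' ⟨hprops, _⟩
  funext i j
  obtain ⟨_, _, hcomp', hrec'⟩ := hprops i j
  set Dm : Matrix (Fin D) (Fin D) ℂ := Q' i j - Qdef i j with hDm
  have hDcomp : Dm = P i * Dm * P i := by
    rw [hDm, Matrix.mul_sub, Matrix.sub_mul, ← hcomp', ← hQcomp i j]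
  have hDJ : Jᴴ * Dm * J = 0 := by
    rw [hDm, Matrix.mul_sub, Matrix.sub_mul, ← hrec', ← hQrec i j, sub_self]
  have hPiD : P i * Dm = Dm := by
    conv_lhs => rw [hDcomp]
    rw [← Matrix.mul_assoc, ← Matrix.mul_assoc, hPP i]
    rw [← hDcomp]
  have hDPi : Dm * P i = Dm := by
    conv_lhs => rw [hDcomp]
    rw [Matrix.mul_assoc, Matrix.mul_assoc, hPP i, ← Matrix.mul_assoc]
    rw [← hDcomp]
  -- step 1 : Dm * J = 0
  have hcross : ∀ k, (P k * J)ᴴ * (Dm * J) = 0 := by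
    intro k
    have h1 : (P k * J)ᴴ * (Dm * J) = Jᴴ * (P k * Dm) * J := by
      rw [hVH k]
      simp only [Matrix.mul_assoc]
    rcases eq_or_ne k i with rfl | hki
    · rw [h1, hPiD, hDJ]
    · rw [h1, ← hPiD, ← Matrix.mul_assoc (P k), hPO k i hki, Matrix.zero_mul,
        Matrix.mul_zero, Matrix.zero_mul]
  have hDmJ : Dm * J = 0 := by
    apply matrix_eq_zero_of_mulVec
    intro ψ
    apply vec_eq_zero_of_orth hmin
    rintro v ⟨k, φ, rfl⟩
    rw [star_mulVec, dotProduct_mulVec, vecMul_vecMul, hcross k]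
    simp
  -- step 2 : Dm kills all spanning vectors
  have hzero : Dm = 0 := by
    apply matrix_eq_zero_of_span hmin
    rintro v ⟨k, φ, rfl⟩
    have hmat : Dm * (P k * J) = 0 := by
      rcases eq_or_ne k i with rfl | hki
      · rw [← Matrix.mul_assoc, hDPi]
        exact hDmJ
      · rw [← Matrix.mul_assoc]
        conv_lhs => rw [hDcomp]
        rw [Matrix.mul_assoc (P i * Dm), hPO i k (Ne.symm hki), Matrix.mul_zero,
          Matrix.zero_mul]
    rw [mulVec_mulVec, hmat, zero_mulVec]
  exact sub_eq_zero.mp hzero
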